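/- For s ≥ 1, 1 ≤ j ≤ s, real σ > max(μ₀, s) where ζ_Λ(t) = ∑_{λ∈Λ} λ^{-t} converges absolutely for Re t > μ₀, and 0 < a, one has ∑_{λ∈Λ} e^{-ajλ}/(1-e^{-aλ})^s = (1/2πi) ∫_{σ-i∞}^{σ+i∞} a^{-t} ζ_Λ(t) ζ_B^{(s)}(t,j) Γ(t) dt, where ζ_B^{(s)}(t,j) = ∑_{l≥0} C(l+s-1,s-1)(l+j)^{-t} is the s-dimensional Barnes zeta function. -/

import Mathlib

open Complex Real

open MeasureTheory Set Filter

section helpers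

lemma my_norm_Gamma_le {s : ℂ} (hs : 0 < s.re) : ‖Complex.Gamma s‖ ≤ Real.Gamma s.re := by
  rw [Complex.Gamma_eq_integral hs, Real.Gamma_eq_integral hs, Complex.GammaIntegral]
  refine norm_integral_le_of_norm_le (Real.GammaIntegral_convergent hs) ?_
  filter_upwards [ae_restrict_mem measurableSet_Ioi] with x hx
  rw [norm_mul, Complex.norm_cpow_eq_rpow_re_of_pos hx]
  simp [Real.abs_exp, Complex.sub_re, Complex.norm_exp]

lemma my_Gamma_decay {σ : ℝ} (hσ : 0 < σ) {y : ℝ} (hy : 1 ≤ |y|) :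
    ‖Complex.Gamma ((σ:ℂ) + y * I)‖ ≤ Real.Gamma (σ + 2) / y ^ 2 := by
  set t : ℂ := (σ:ℂ) + y * I with ht
  have htre : t.re = σ := by simp [ht]
  have htim : t.im = y := by simp [ht]
  have ht0 : t ≠ 0 := fun h => by simp [h] at htre; linarith
  have ht1 : t + 1 ≠ 0 := fun h => by
    have : (t + 1).re = 0 := by rw [h]; simp
    simp [Complex.add_re, htre] at this; linarith
  have hrec : Complex.Gamma (t + 2) = (t + 1) * t * Complex.Gamma t := by
    have h1 := Complex.Gamma_add_one t ht0
    have h2 := Complex.Gamma_add_one (t + 1) ht1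
    rw [show t + 1 + 1 = t + 2 by ring] at h2
    rw [h2, h1]; ring
  have hnum : ‖Complex.Gamma (t + 2)‖ ≤ Real.Gamma (σ + 2) := by
    have : (t + 2).re = σ + 2 := by simp [Complex.add_re, htre]
    rw [← this]
    exact my_norm_Gamma_le (by rw [this]; linarith)
  have h1 : |y| ≤ ‖t‖ := by
    rw [← htim]; exact (Complex.abs_im_le_norm t)
  have h2 : |y| ≤ ‖t + 1‖ := by
    have : (t + 1).im = y := by simp [Complex.add_im, htim]
    rw [← this]; exact (Complex.abs_im_le_norm _)
  have hyne : y ≠ 0 := by intro h; rw [h, abs_zero] at hy; linarith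
  have hy2 : (0:ℝ) < y ^ 2 := by positivity
  have hden : y ^ 2 ≤ ‖t + 1‖ * ‖t‖ := by
    calc y ^ 2 = |y| * |y| := by rw [← abs_mul, sq, abs_mul_self]
    _ ≤ ‖t + 1‖ * ‖t‖ := by
        apply mul_le_mul h2 h1 (abs_nonneg y) (norm_nonneg _)
  rw [le_div_iff₀ hy2]
  calc ‖Complex.Gamma t‖ * y ^ 2 ≤ ‖Complex.Gamma t‖ * (‖t + 1‖ * ‖t‖) :=
        mul_le_mul_of_nonneg_left hden (norm_nonneg _)
    _ = ‖Complex.Gamma (t + 2)‖ := by rw [hrec, norm_mul, norm_mul]; ring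
    _ ≤ Real.Gamma (σ + 2) := hnum

lemma my_Gamma_continuous {σ : ℝ} (hσ : 0 < σ) :
    Continuous fun y : ℝ => Complex.Gamma ((σ:ℂ) + y * I) := by
  rw [continuous_iff_continuousAt]
  intro y
  have h1 : ContinuousAt Complex.Gamma ((σ:ℂ) + y * I) := by
    apply (Complex.differentiableAt_Gamma _ ?_).continuousAt
    intro n h
    have : ((σ:ℂ) + y * I).re = σ := by simp
    rw [h] at this
    simp at this
    have : (0:ℝ) ≤ n := n.cast_nonneg
    linarith
  have h2 : Continuous fun y : ℝ => (σ:ℂ) + y * I := by fun_prop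
  exact ContinuousAt.comp (g := Complex.Gamma) (f := fun y : ℝ => (σ:ℂ) + y * I) h1
    h2.continuousAt

lemma my_Gamma_vertical_integrable {σ : ℝ} (hσ : 0 < σ) :
    Integrable (fun y : ℝ => Complex.Gamma ((σ:ℂ) + y * I)) := by
  apply MeasureTheory.LocallyIntegrable.integrable_of_isBigO_atTop_of_norm_isNegInvariant
    (g := fun y : ℝ => y ^ (-2 : ℝ))
  · exact (my_Gamma_continuous hσ).locallyIntegrable
  · apply Eventually.of_forall
    intro y
    have : (σ:ℂ) + (-y) * I = (starRingEnd ℂ) ((σ:ℂ) + y * I) := by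
      simp [Complex.ext_iff]
    simp only [Function.comp]
    push_cast
    rw [this, Complex.Gamma_conj]
    simp
  · rw [Asymptotics.isBigO_iff]
    refine ⟨Real.Gamma (σ + 2), ?_⟩
    filter_upwards [eventually_ge_atTop (1:ℝ)] with y hy
    have h1 : ‖Complex.Gamma ((σ:ℂ) + y * I)‖ ≤ Real.Gamma (σ + 2) / y ^ 2 :=
      my_Gamma_decay hσ (by rwa [_root_.abs_of_nonneg (by linarith : (0:ℝ) ≤ y)])
    have hy0 : (0:ℝ) < y := by linarith
    have : ‖y ^ (-2:ℝ)‖ = (y ^ 2)⁻¹ := by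
      rw [Real.norm_eq_abs, _root_.abs_of_nonneg (Real.rpow_nonneg hy0.le _),
        Real.rpow_neg hy0.le, show (2:ℝ) = ((2:ℕ):ℝ) by norm_num, Real.rpow_natCast]
    rw [this, ← div_eq_mul_inv]
    exact h1
  · exact ⟨Ioi 1, Ioi_mem_atTop 1, integrableOn_Ioi_rpow_of_lt (by norm_num) one_pos⟩

lemma my_integrable_tsum {ι : Type*} [Countable ι] {μ : Measure ℝ} {F : ι → ℝ → ℝ}
    (hF : ∀ i, Integrable (F i) μ) (h0 : ∀ i, 0 ≤ᵐ[μ] F i)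
    (hs : Summable fun i => ∫ x, F i x ∂μ) :
    Integrable (fun x => ∑' i, F i x) μ := by
  have hmeas : ∀ i, AEMeasurable (F i) μ := fun i => (hF i).aemeasurable
  have hGmeas : AEMeasurable (fun x => ∑' i, ENNReal.ofReal (F i x)) μ :=
    AEMeasurable.ennreal_tsum fun i => (hmeas i).ennreal_ofReal
  have hnn : ∀ i, 0 ≤ ∫ x, F i x ∂μ := fun i => integral_nonneg_of_ae (h0 i)
  have hGint : ∫⁻ x, (∑' i, ENNReal.ofReal (F i x)) ∂μ ≠ ⊤ := by
    rw [lintegral_tsum fun i => (hmeas i).ennreal_ofReal]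
    have heq : ∀ i, ∫⁻ x, ENNReal.ofReal (F i x) ∂μ = ENNReal.ofReal (∫ x, F i x ∂μ) :=
      fun i => (MeasureTheory.ofReal_integral_eq_lintegral_ofReal (hF i) (h0 i)).symm
    rw [tsum_congr heq, ← ENNReal.ofReal_tsum_of_nonneg hnn hs]
    exact ENNReal.ofReal_ne_top
  have key : Integrable (fun x => (∑' i, ENNReal.ofReal (F i x)).toReal) μ :=
    integrable_toReal_of_lintegral_ne_top hGmeas hGint
  refine key.congr ?_
  have hae : ∀ᵐ x ∂μ, ∀ i, 0 ≤ F i x := (ae_all_iff).mpr h0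
  filter_upwards [hae] with x hx
  rw [ENNReal.tsum_toReal_eq fun i => ENNReal.ofReal_ne_top]
  exact tsum_congr fun i => ENNReal.toReal_ofReal (hx i)

lemma my_barnes_summable (s j : ℕ) (hs : 1 ≤ s) (hj1 : 1 ≤ j) {r : ℝ} (hr : (s:ℝ) < r) :
    Summable fun k : ℕ => (((k + s - 1).choose (s - 1) : ℕ) : ℝ) * ((k + j : ℕ) : ℝ) ^ (-r) := by
  have hs1 : (1:ℝ) ≤ (s:ℝ) := by exact_mod_cast hs
  have hd : 1 < r - ((s:ℝ) - 1) := by linarith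
  set d : ℝ := r - ((s:ℝ) - 1) with hdd
  have hsum : Summable fun k : ℕ => ((k + j : ℕ) : ℝ) ^ (-d) := by
    have h0 : Summable fun n : ℕ => (n:ℝ) ^ (-d) := by
      rw [Real.summable_nat_rpow]; linarith
    have := (summable_nat_add_iff (f := fun n : ℕ => (n:ℝ) ^ (-d)) j).mpr h0
    exact this.congr fun k => by push_cast; ring_nf
  refine Summable.of_nonneg_of_le (fun k => by positivity) (fun k => ?_)
    (hsum.mul_left ((s:ℝ) ^ (s-1)))
  set q : ℝ := ((k + j : ℕ) : ℝ) with hqq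
  have hq1 : (1:ℝ) ≤ q := by
    rw [hqq]; exact_mod_cast (by omega : 1 ≤ k + j)
  have hq0 : (0:ℝ) < q := lt_of_lt_of_le one_pos hq1
  have hcn : (k + s - 1).choose (s - 1) ≤ (s * (k + j)) ^ (s - 1) := by
    refine le_trans (Nat.choose_le_pow _ _) (Nat.pow_le_pow_left ?_ _)
    have h3 : k ≤ s * k := Nat.le_mul_of_pos_left k hs
    have h4 : s ≤ s * j := Nat.le_mul_of_pos_right s hj1
    have h5 : s * (k + j) = s * k + s * j := Nat.mul_add s k j
    omega
  have hc : (((k + s - 1).choose (s - 1) : ℕ) : ℝ) ≤ ((s:ℝ) * q) ^ (s - 1) := by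
    have := (Nat.cast_le (α := ℝ)).mpr hcn
    refine this.trans_eq ?_
    push_cast [hqq]
    ring
  calc (((k + s - 1).choose (s - 1) : ℕ) : ℝ) * q ^ (-r)
      ≤ ((s:ℝ) * q) ^ (s - 1) * q ^ (-r) := by
        exact mul_le_mul_of_nonneg_right hc (Real.rpow_nonneg hq0.le _)
    _ = (s:ℝ) ^ (s-1) * q ^ (-d) := by
        rw [mul_pow, mul_assoc, ← Real.rpow_natCast q (s-1), ← Real.rpow_add hq0,
          show ((s-1:ℕ):ℝ) + -r = -d by rw [Nat.cast_sub hs]; push_cast; ring]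

end helpers

/-- Mellin–Barnes representation of `∑_{λ∈Λ} e^{-ajλ}/(1-e^{-aλ})^s`:
for `s ≥ 1`, `1 ≤ j ≤ s`, `a > 0`, and `σ > max(μ₀, s)` where the Dirichlet series
`ζ_Λ(t) = ∑_{λ∈Λ} λ^{-t}` converges absolutely for `Re t > μ₀`, one has
`∑_{λ∈Λ} e^{-ajλ}/(1-e^{-aλ})^s
   = (1/2πi) ∫_{σ-i∞}^{σ+i∞} a^{-t} ζ_Λ(t) ζ_B^{(s)}(t,j) Γ(t) dt`,
with `ζ_B^{(s)}(t,j) = ∑_{l≥0} C(l+s-1,s-1) (l+j)^{-t}` the Barnes zeta function of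
dimension `s`. -/
theorem S_sj_mellin_barnes (Λ : Set ℕ) (hΛ : ∀ l ∈ Λ, 1 ≤ l)
    (μ₀ : ℝ) (habs : ∀ r : ℝ, μ₀ < r → Summable fun l : Λ => ((l : ℝ) ^ r)⁻¹)
    (s j : ℕ) (hs : 1 ≤ s) (hj1 : 1 ≤ j) (hjs : j ≤ s)
    (a : ℝ) (ha : 0 < a) (σ : ℝ) (hσ : max μ₀ (s : ℝ) < σ) :
    ((∑' l : Λ, Real.exp (-(a * j * l)) / (1 - Real.exp (-(a * l))) ^ s : ℝ) : ℂ)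
      = (2 * (π : ℂ) * I)⁻¹ *
        ∫ y : ℝ,
          (a : ℂ) ^ (-((σ : ℂ) + y * I)) *
            (∑' l : Λ, ((l : ℕ) : ℂ) ^ (-((σ : ℂ) + y * I))) *
            (∑' k : ℕ, (((k + s - 1).choose (s - 1) : ℕ) : ℂ) *
              (((k + j : ℕ) : ℂ) ^ (-((σ : ℂ) + y * I)))) *
            Complex.Gamma ((σ : ℂ) + y * I) * I := by
  have hσs : (s:ℝ) < σ := lt_of_le_of_lt (le_max_right _ _) hσ
  have hμσ : μ₀ < σ := lt_of_le_of_lt (le_max_left _ _) hσ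
  have hs1R : (1:ℝ) ≤ (s:ℝ) := by exact_mod_cast hs
  have hσ0 : (0:ℝ) < σ := by linarith
  set cc : Λ × ℕ → ℕ := fun i => (i.2 + s - 1).choose (s - 1) with hcc_def
  set pp : Λ × ℕ → ℝ := fun i => ((i.1 : ℕ) : ℝ) * ((i.2 + j : ℕ) : ℝ) with hpp_def
  have hL1 : ∀ l : Λ, (1:ℝ) ≤ ((l:ℕ):ℝ) := fun l => by exact_mod_cast hΛ l l.2
  have hq1 : ∀ k : ℕ, (1:ℝ) ≤ ((k + j : ℕ):ℝ) := fun k => by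
    exact_mod_cast (by omega : 1 ≤ k + j)
  have hpp1 : ∀ i, (1:ℝ) ≤ pp i := fun i => by
    have := mul_le_mul (hL1 i.1) (hq1 i.2) zero_le_one (by linarith [hL1 i.1])
    simpa [hpp_def] using this
  have hpp0 : ∀ i, (0:ℝ) < pp i := fun i => lt_of_lt_of_le one_pos (hpp1 i)
  -- λ-side summability
  have hΛsum : ∀ r : ℝ, μ₀ < r → Summable fun l : Λ => ((l:ℕ):ℝ) ^ (-r) := by
    intro r hrr
    refine (habs r hrr).congr fun l => ?_
    exact (Real.rpow_neg (by linarith [hL1 l]) r).symm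
  have hBsum : ∀ r : ℝ, (s:ℝ) < r →
      Summable fun k : ℕ => (((k + s - 1).choose (s-1) : ℕ):ℝ) * ((k + j : ℕ):ℝ) ^ (-r) :=
    fun r hr => my_barnes_summable s j hs hj1 hr
  -- full power summability
  have hSfull : ∀ r : ℝ, max μ₀ (s:ℝ) < r →
      Summable fun i : Λ × ℕ => (cc i : ℝ) * pp i ^ (-r) := by
    intro r hr
    have h1 := hΛsum r (lt_of_le_of_lt (le_max_left _ _) hr)
    have h2 := hBsum r (lt_of_le_of_lt (le_max_right _ _) hr)
    have h3 := h1.mul_of_nonneg h2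
      (fun l => Real.rpow_nonneg (by linarith [hL1 l]) _)
      (fun k => by positivity)
    refine h3.congr fun i => ?_
    simp only [hcc_def, hpp_def]
    rw [Real.mul_rpow (by linarith [hL1 i.1]) (by linarith [hq1 i.2])]
    ring
  -- exponential summability
  have hSexp : ∀ x : ℝ, 0 < x → Summable fun i : Λ × ℕ => (cc i : ℝ) * rexp (-pp i * x) := by
    intro x hx
    have hr0 : (0:ℝ) ≤ rexp (-(x/2)) := (Real.exp_pos _).le
    have hr1 : rexp (-(x/2)) < 1 := Real.exp_lt_one_iff.mpr (by linarith)
    have hgeoΛ : Summable fun l : Λ => rexp (-(x/2)) ^ (l:ℕ) :=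
      (summable_geometric_of_lt_one hr0 hr1).subtype _
    have hch : Summable fun k : ℕ => ((k + (s-1)).choose (s-1) : ℝ) * rexp (-(x/2)) ^ k := by
      have := hasSum_choose_mul_geometric_of_norm_lt_one (𝕜 := ℝ) (s-1)
        (r := rexp (-(x/2))) (by rwa [Real.norm_eq_abs, _root_.abs_of_nonneg hr0])
      exact this.summable
    have h3 := hgeoΛ.mul_of_nonneg hch
      (fun l => pow_nonneg hr0 _)
      (fun k => mul_nonneg (Nat.cast_nonneg _) (pow_nonneg hr0 _))
    refine Summable.of_nonneg_of_le (fun i => by positivity) (fun i => ?_) h3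
    obtain ⟨l, k⟩ := i
    set L : ℝ := ((l:ℕ):ℝ)
    have hL : (1:ℝ) ≤ L := hL1 l
    have hqk : (k:ℝ) ≤ ((k + j : ℕ):ℝ) := by push_cast; linarith
    have hppLk : (L + k) / 2 ≤ pp (l, k) := by
      have h5 : L ≤ pp (l, k) := by
        have := le_mul_of_one_le_right (by linarith : (0:ℝ) ≤ L) (hq1 k)
        simpa [hpp_def] using this
      have h6 : (k:ℝ) ≤ pp (l, k) := by
        have := le_mul_of_one_le_left (by positivity : (0:ℝ) ≤ ((k+j:ℕ):ℝ)) hL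
        simp only [hpp_def]
        linarith [hqk]
      linarith
    have hexp : rexp (-pp (l,k) * x) ≤ rexp (-(x/2)) ^ (l:ℕ) * rexp (-(x/2)) ^ k := by
      rw [← Real.exp_nat_mul, ← Real.exp_nat_mul, ← Real.exp_add]
      apply Real.exp_le_exp.mpr
      have : ((l:ℕ):ℝ) * -(x/2) + (k:ℝ) * -(x/2) = -((L + k)/2 * x) := by ring
      rw [this]
      have := mul_le_mul_of_nonneg_right hppLk hx.le
      linarith
    have hcc_eq : (cc (l,k) : ℝ) = ((k + (s-1)).choose (s-1) : ℝ) := by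
      have : (k + s - 1) = k + (s - 1) := by omega
      simp [hcc_def, this]
    calc (cc (l,k) : ℝ) * rexp (-pp (l,k) * x)
        ≤ (cc (l,k) : ℝ) * (rexp (-(x/2)) ^ (l:ℕ) * rexp (-(x/2)) ^ k) :=
          mul_le_mul_of_nonneg_left hexp (Nat.cast_nonneg _)
      _ = rexp (-(x/2)) ^ (l:ℕ) * (((k + (s-1)).choose (s-1) : ℝ) * rexp (-(x/2)) ^ k) := by
          rw [hcc_eq]; ring
  -- the function and its closed form
  set Fr : ℝ → ℝ := fun x => ∑' i : Λ × ℕ, (cc i : ℝ) * rexp (-pp i * x) with hFr_def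
  set F : ℝ → ℂ := fun x => ((Fr x : ℝ) : ℂ) with hF_def
  have hFr_nonneg : ∀ x, 0 ≤ Fr x := fun x => tsum_nonneg fun i => by positivity
  -- fiberwise hasSum
  have hfiber : ∀ x : ℝ, 0 < x → ∀ l : Λ,
      HasSum (fun k : ℕ => (cc (l, k) : ℝ) * rexp (-pp (l,k) * x))
        (rexp (-(x * j * ((l:ℕ):ℝ))) / (1 - rexp (-(x * ((l:ℕ):ℝ)))) ^ s) := by
    intro x hx l
    set L : ℝ := ((l:ℕ):ℝ) with hLdef
    have hL : (1:ℝ) ≤ L := hL1 l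
    set r : ℝ := rexp (-(x * L)) with hrdef
    have hr0 : (0:ℝ) ≤ r := (Real.exp_pos _).le
    have hr1 : r < 1 := Real.exp_lt_one_iff.mpr (by nlinarith)
    have base := hasSum_choose_mul_geometric_of_norm_lt_one (𝕜 := ℝ) (s-1)
      (r := r) (by rwa [Real.norm_eq_abs, _root_.abs_of_nonneg hr0])
    have h2 := base.mul_right (r ^ j)
    have heq : (fun k : ℕ => (cc (l, k) : ℝ) * rexp (-pp (l,k) * x))
        = fun n : ℕ => ((n + (s-1)).choose (s-1) : ℝ) * r ^ n * (r ^ j) := by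
      funext n
      have hc : (cc (l,n) : ℝ) = ((n + (s-1)).choose (s-1) : ℝ) := by
        have : (n + s - 1) = n + (s - 1) := by omega
        simp [hcc_def, this]
      rw [hc, mul_assoc, ← pow_add, ← Real.exp_nat_mul]
      congr 1
      rw [Real.exp_eq_exp]
      simp only [hpp_def]
      push_cast
      ring
    have hval : 1/(1-r) ^ ((s-1)+1) * (r ^ j) =
        rexp (-(x * j * L)) / (1 - rexp (-(x * L))) ^ s := by
      rw [show (s-1)+1 = s from by omega, ← Real.exp_nat_mul, ← hrdef,
        show (j:ℝ) * -(x * L) = -(x * j * L) by ring]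
      ring
    rw [heq, ← hval]
    exact h2
  have hFrsum : ∀ x : ℝ, 0 < x →
      HasSum (fun l : Λ => rexp (-(x * j * ((l:ℕ):ℝ))) / (1 - rexp (-(x * ((l:ℕ):ℝ)))) ^ s)
        (Fr x) :=
    fun x hx => HasSum.prod_fiberwise ((hSexp x hx).hasSum) (hfiber x hx)
  -- LHS = F a
  have hLHS : (∑' l : Λ, rexp (-(a * j * ((l:ℕ):ℝ))) / (1 - rexp (-(a * ((l:ℕ):ℝ)))) ^ s) = Fr a :=
    (hFrsum a ha).tsum_eq
  -- continuity of Fr at positive points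
  have hFrcont : ∀ x : ℝ, 0 < x → ContinuousAt Fr x := by
    intro x hx
    have hcont : ContinuousOn Fr (Ioi (x/2)) := by
      apply continuousOn_tsum (u := fun i => (cc i : ℝ) * rexp (-pp i * (x/2)))
        (fun i => (by fun_prop : Continuous fun t : ℝ => (cc i : ℝ) * rexp (-pp i * t)).continuousOn)
        (hSexp (x/2) (by linarith))
      intro i t ht
      rw [Real.norm_eq_abs, _root_.abs_of_nonneg (by positivity)]
      apply mul_le_mul_of_nonneg_left _ (Nat.cast_nonneg _)
      apply Real.exp_le_exp.mpr
      have ht' : x/2 ≤ t := le_of_lt ht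
      nlinarith [hpp0 i]
    exact hcont.continuousAt (Ioi_mem_nhds (by linarith))
  -- Mellin convergence
  have hMC : MellinConvergent F (σ:ℂ) := by
    have hreal : Integrable (fun x => ∑' i : Λ × ℕ,
        ((cc i : ℝ) * (x ^ (σ-1) * rexp (-pp i * x)))) (volume.restrict (Ioi 0)) := by
      apply my_integrable_tsum
      · intro i
        have hbase : IntegrableOn (fun x : ℝ => x ^ (σ-1) * rexp (-(pp i * x))) (Ioi 0) := by
          have h0 := Real.GammaIntegral_convergent hσ0
          rw [← mul_zero (pp i), ← integrableOn_Ioi_comp_mul_left_iff _ _ (hpp0 i)] at h0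
          have h1 := h0.const_mul ((pp i ^ (σ-1))⁻¹)
          refine (IntegrableOn.congr_fun h1 (fun t ht => ?_) measurableSet_Ioi)
          have htpos : (0:ℝ) < t := ht
          rw [Real.mul_rpow (hpp0 i).le htpos.le]
          field_simp [Real.exp_ne_zero, (Real.rpow_pos_of_pos (hpp0 i) (σ-1)).ne']
        exact IntegrableOn.congr_fun (hbase.const_mul (cc i : ℝ))
          (fun t ht => by rw [neg_mul]) measurableSet_Ioi
      · intro i
        filter_upwards [ae_restrict_mem measurableSet_Ioi] with x hx
        have hx' : (0:ℝ) < x := hx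
        positivity
      · have hval : ∀ i : Λ × ℕ, ∫ x in Ioi 0, (cc i:ℝ) * (x ^ (σ-1) * rexp (-pp i * x))
            = (cc i:ℝ) * pp i ^ (-σ) * Real.Gamma σ := by
          intro i
          rw [MeasureTheory.integral_const_mul]
          have h2 : ∫ x in Ioi 0, x ^ (σ-1) * rexp (-pp i * x) = (1/pp i) ^ σ * Real.Gamma σ := by
            rw [← Real.integral_rpow_mul_exp_neg_mul_Ioi hσ0 (hpp0 i)]
            refine setIntegral_congr_fun measurableSet_Ioi fun t ht => by rw [neg_mul]
          rw [h2, one_div, Real.inv_rpow (hpp0 i).le, ← Real.rpow_neg (hpp0 i).le]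
          ring
        have hS2 := (hSfull σ hσ).mul_right (Real.Gamma σ)
        refine hS2.congr fun i => ?_
        rw [hval i]
    rw [MellinConvergent]
    apply Integrable.mono' (g := fun x => ∑' i : Λ × ℕ,
        ((cc i : ℝ) * (x ^ (σ-1) * rexp (-pp i * x)))) hreal
    · have hcΛ : ContinuousOn (fun x : ℝ => (x:ℂ) ^ ((σ:ℂ)-1) • F x) (Ioi 0) := by
        apply ContinuousOn.fun_smul
        · intro x hx
          exact (continuousAt_ofReal_cpow_const x _ (Or.inr (ne_of_gt hx))).continuousWithinAt
        · intro x hx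
          exact ((Complex.continuous_ofReal.continuousAt).comp (hFrcont x hx)).continuousWithinAt
      exact hcΛ.aestronglyMeasurable measurableSet_Ioi
    · filter_upwards [ae_restrict_mem measurableSet_Ioi] with x hx
      have hx' : (0:ℝ) < x := hx
      have h1 : ‖(x:ℂ) ^ ((σ:ℂ)-1) • F x‖ = x ^ (σ-1) * Fr x := by
        rw [norm_smul, hF_def]
        rw [ Complex.norm_cpow_eq_rpow_re_of_pos hx']
        simp only [Complex.sub_re, Complex.ofReal_re, Complex.one_re]
        rw [Complex.norm_real, Real.norm_eq_abs, _root_.abs_of_nonneg (hFr_nonneg x)]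
      rw [h1]
      have h2 : ∑' i : Λ × ℕ, (cc i:ℝ) * (x ^ (σ-1) * rexp (-pp i * x))
          = x ^ (σ-1) * Fr x := by
        rw [hFr_def, ← tsum_mul_left]
        exact tsum_congr fun i => by ring
      rw [h2]
  -- Mellin transform formula on the vertical line
  have hMform : ∀ y : ℝ, mellin F ((σ:ℂ) + y * I)
      = Complex.Gamma ((σ:ℂ) + y * I) *
        ∑' i : Λ × ℕ, ((cc i : ℕ):ℂ) * (((pp i : ℝ)):ℂ) ^ (-((σ:ℂ) + y * I)) := by
    intro y
    set t : ℂ := (σ:ℂ) + y * I with htdef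
    have htre : t.re = σ := by simp [htdef]
    have hFsum : ∀ x ∈ Ioi (0:ℝ),
        HasSum (fun i : Λ × ℕ => ((cc i : ℕ):ℂ) * (rexp (-pp i * x) : ℂ)) (F x) := by
      intro x hx
      have hre := (hSexp x hx).hasSum
      have h2 : HasSum (fun i : Λ × ℕ => (((cc i : ℝ) * rexp (-pp i * x) : ℝ) : ℂ))
          ((Fr x : ℝ):ℂ) := Complex.hasSum_ofReal.mpr hre
      have h3 : (fun i : Λ × ℕ => ((cc i : ℕ):ℂ) * (rexp (-pp i * x) : ℂ))
          = fun i : Λ × ℕ => (((cc i : ℝ) * rexp (-pp i * x) : ℝ) : ℂ) := by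
        funext i; push_cast; ring
      rw [h3]
      exact h2
    have hnormsum : Summable fun i : Λ × ℕ => ‖((cc i : ℕ):ℂ)‖ / pp i ^ t.re := by
      refine (hSfull σ hσ).congr fun i => ?_
      rw [htre, Complex.norm_natCast, div_eq_mul_inv, ← Real.rpow_neg (hpp0 i).le]
    have key := hasSum_mellin (fun i => Or.inr (hpp0 i)) (by rw [htre]; exact hσ0)
      hFsum hnormsum
    rw [← key.tsum_eq, ← tsum_mul_left]
    exact tsum_congr fun i => by
      rw [Complex.cpow_neg, div_eq_mul_inv]; ring
  -- splitting the double sum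
  have hsplit : ∀ y : ℝ,
      (∑' i : Λ × ℕ, ((cc i : ℕ):ℂ) * (((pp i : ℝ)):ℂ) ^ (-((σ:ℂ) + y * I)))
      = (∑' l : Λ, ((l : ℕ) : ℂ) ^ (-((σ:ℂ) + y * I))) *
        (∑' k : ℕ, (((k + s - 1).choose (s - 1) : ℕ) : ℂ) *
          (((k + j : ℕ) : ℂ) ^ (-((σ:ℂ) + y * I)))) := by
    intro y
    set t : ℂ := (σ:ℂ) + y * I with htdef
    have htre : (-t).re = -σ := by simp [htdef]
    have hnormΛ : Summable fun l : Λ => ‖((l : ℕ) : ℂ) ^ (-t)‖ := by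
      refine (hΛsum σ hμσ).congr fun l => ?_
      have h0 : (0:ℝ) < ((l:ℕ):ℝ) := by linarith [hL1 l]
      rw [show ((l:ℕ):ℂ) = (((l:ℕ):ℝ):ℂ) by push_cast; rfl, 
        Complex.norm_cpow_eq_rpow_re_of_pos h0, htre]
    have hnormB : Summable fun k : ℕ =>
        ‖(((k + s - 1).choose (s - 1) : ℕ) : ℂ) * (((k + j : ℕ) : ℂ) ^ (-t))‖ := by
      refine (hBsum σ hσs).congr fun k => ?_
      have h0 : (0:ℝ) < ((k+j:ℕ):ℝ) := by linarith [hq1 k]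
      rw [norm_mul, Complex.norm_natCast, show ((k+j:ℕ):ℂ) = (((k+j:ℕ):ℝ):ℂ) by push_cast; rfl,
         Complex.norm_cpow_eq_rpow_re_of_pos h0, htre]
    rw [tsum_mul_tsum_of_summable_norm hnormΛ hnormB]
    refine tsum_congr fun i => ?_
    have h1 : (0:ℝ) ≤ ((i.1:ℕ):ℝ) := by linarith [hL1 i.1]
    have h2 : (0:ℝ) ≤ ((i.2+j:ℕ):ℝ) := by linarith [hq1 i.2]
    show ((cc i : ℕ):ℂ) * (((pp i : ℝ)):ℂ) ^ (-t)
        = ((i.1 : ℕ) : ℂ) ^ (-t) * ((((i.2 + s - 1).choose (s - 1) : ℕ) : ℂ) *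
          (((i.2 + j : ℕ) : ℂ) ^ (-t)))
    simp only [hpp_def, hcc_def]
    rw [Complex.ofReal_mul, mul_cpow_ofReal_nonneg h1 h2]
    rw [show (((i.1:ℕ):ℝ):ℂ) = ((i.1:ℕ):ℂ) by push_cast; rfl,
      show (((i.2+j:ℕ):ℝ):ℂ) = ((i.2+j:ℕ):ℂ) by push_cast; rfl]
    ring
  -- vertical integrability
  have hVI : Complex.VerticalIntegrable (mellin F) σ := by
    have hEq : (fun y : ℝ => mellin F ((σ:ℂ) + y * I))
        = fun y : ℝ => Complex.Gamma ((σ:ℂ)+y*I) *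
            ∑' i : Λ × ℕ, ((cc i : ℕ):ℂ) * (((pp i : ℝ)):ℂ) ^ (-((σ:ℂ) + y * I)) :=
      funext hMform
    show Integrable (fun y : ℝ => mellin F ((σ:ℂ) + y * I)) volume
    rw [hEq]
    set CB : ℝ := ∑' i : Λ × ℕ, (cc i:ℝ) * pp i ^ (-σ) with hCB
    have hnorm_eq : ∀ (yy : ℝ) (i : Λ × ℕ),
        ‖((cc i : ℕ):ℂ) * (((pp i : ℝ)):ℂ) ^ (-((σ:ℂ) + yy * I))‖ = (cc i:ℝ) * pp i ^ (-σ) := by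
      intro yy i
      rw [norm_mul, Complex.norm_natCast, 
        Complex.norm_cpow_eq_rpow_re_of_pos (hpp0 i)]
      congr 2
      simp
    have hZcont : Continuous fun y : ℝ =>
        ∑' i : Λ × ℕ, ((cc i : ℕ):ℂ) * (((pp i : ℝ)):ℂ) ^ (-((σ:ℂ) + y * I)) := by
      apply continuous_tsum (u := fun i => (cc i:ℝ) * pp i ^ (-σ))
      · intro i
        apply Continuous.mul continuous_const
        apply Continuous.const_cpow (by fun_prop)
        exact Or.inl (Complex.ofReal_ne_zero.mpr (hpp0 i).ne')
      · exact hSfull σ hσ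
      · intro i y
        exact le_of_eq (hnorm_eq y i)
    apply Integrable.mono' (((my_Gamma_vertical_integrable hσ0).norm.const_mul CB))
    · exact ((my_Gamma_continuous hσ0).mul hZcont).aestronglyMeasurable
    · refine Eventually.of_forall fun y => ?_
      rw [norm_mul]
      have hZb : ‖∑' i : Λ × ℕ, ((cc i : ℕ):ℂ) * (((pp i : ℝ)):ℂ) ^ (-((σ:ℂ) + y * I))‖ ≤ CB := by
        refine (norm_tsum_le_tsum_norm ?_).trans_eq ?_
        · refine (hSfull σ hσ).congr fun i => (hnorm_eq y i).symm
        · exact tsum_congr fun i => hnorm_eq y i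
      rw [mul_comm]
      exact mul_le_mul_of_nonneg_right hZb (norm_nonneg _)
  -- Mellin inversion
  have hFa : ContinuousAt F a := (Complex.continuous_ofReal.continuousAt).comp (hFrcont a ha)
  have hinv := mellinInv_mellin_eq σ F ha hMC hVI hFa
  -- assemble
  rw [hLHS, show ((Fr a : ℝ):ℂ) = F a from rfl, ← hinv, mellinInv]
  have hIeq : (∫ y : ℝ, (a:ℂ) ^ (-((σ:ℂ) + y * I)) *
        (∑' l : Λ, ((l : ℕ) : ℂ) ^ (-((σ:ℂ) + y * I))) *
        (∑' k : ℕ, (((k + s - 1).choose (s - 1) : ℕ) : ℂ) *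
          (((k + j : ℕ) : ℂ) ^ (-((σ:ℂ) + y * I)))) *
        Complex.Gamma ((σ:ℂ) + y * I) * I)
      = (∫ y : ℝ, (a:ℂ) ^ (-((σ:ℂ) + y * I)) • mellin F ((σ:ℂ) + y * I)) * I := by
    rw [← integral_mul_const]
    refine integral_congr_ae (Eventually.of_forall fun y => ?_)
    simp only [smul_eq_mul]
    rw [hMform y, hsplit y]
    ring
  rw [hIeq]
  set Iv : ℂ := ∫ y : ℝ, (a:ℂ) ^ (-((σ:ℂ) + y * I)) • mellin F ((σ:ℂ) + y * I) with hIv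
  have hstep : (2*(π:ℂ)*I)⁻¹ * (Iv * I) = (2*(π:ℂ))⁻¹ * Iv := by
    calc (2*(π:ℂ)*I)⁻¹ * (Iv * I) = ((2*(π:ℂ))⁻¹ * I⁻¹) * (I * Iv) := by rw [mul_inv]; ring
      _ = (2*(π:ℂ))⁻¹ * ((I⁻¹ * I) * Iv) := by ring
      _ = (2*(π:ℂ))⁻¹ * Iv := by rw [inv_mul_cancel₀ Complex.I_ne_zero, one_mul]
  rw [hstep, Complex.real_smul]
  congr 1
  push_cast
  rw [one_div]
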